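/- Basic inequality for the Lasso yields a cone constraint: suppose L : ℝᵖ → ℝ is convex and differentiable, λ > 0, θ ∈ ℝᵖ has support contained in {1,…,d} (θ_j = 0 for j > d), and θ̂ minimizes Q(β) = L(β) + λ‖β‖₁. Let D = θ̂ − θ. If max_j |∂L/∂β_j(θ)| ≤ λ/2, then Σ_{j>d} |D_j| ≤ 3·Σ_{j≤d} |D_j|. -/

import Mathlib

/-- the Lasso basic inequality yields the cone constraint
Σ_{j>d} |D_j| ≤ 3 Σ_{j≤d} |D_j| (indices 0-based: j < d are the "relevant" ones). -/
theorem stmt_9 (p d : ℕ) (L : (Fin p → ℝ) → ℝ)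
    (hconv : ConvexOn ℝ Set.univ L) (hdiff : Differentiable ℝ L)
    (lam : ℝ) (hlam : 0 < lam)
    (θ θhat : Fin p → ℝ)
    (hsupp : ∀ j : Fin p, d ≤ (j : ℕ) → θ j = 0)
    (hmin : ∀ β, L θhat + lam * ∑ j, |θhat j| ≤ L β + lam * ∑ j, |β j|)
    (hgrad : ∀ j : Fin p, |fderiv ℝ L θ (Pi.single j 1)| ≤ lam / 2) :
    ∑ j ∈ Finset.univ.filter (fun j : Fin p => d ≤ (j : ℕ)), |θhat j - θ j| ≤
      3 * ∑ j ∈ Finset.univ.filter (fun j : Fin p => (j : ℕ) < d), |θhat j - θ j| := by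
  classical
  set D : Fin p → ℝ := fun j => θhat j - θ j with hD
  -- the one-dimensional restriction along the segment from θ to θhat
  set g : ℝ → ℝ := fun t => L (θ + t • D) with hg
  -- convexity gradient inequality: fderiv L θ D ≤ L θhat - L θ
  have hcurve : ∀ t : ℝ, HasDerivAt (fun t : ℝ => θ + t • D) D t := by
    intro t
    simpa using ((hasDerivAt_id t).smul_const D).const_add θ
  have hgderiv : HasDerivAt g (fderiv ℝ L θ D) 0 := by
    have hF : HasFDerivAt L (fderiv ℝ L θ) ((fun t : ℝ => θ + t • D) 0) := by
      simpa using (hdiff θ).hasFDerivAt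
    have := hF.comp_hasDerivAt 0 (hcurve 0)
    exact this
  have hgconv : ConvexOn ℝ Set.univ g := by
    have haff : ConvexOn ℝ ((fun t : ℝ => θ + t • D) ⁻¹' Set.univ)
        (L ∘ (AffineMap.lineMap θ (θ + D) : ℝ →ᵃ[ℝ] (Fin p → ℝ))) := by
      simpa using hconv.comp_affineMap (AffineMap.lineMap θ (θ + D))
    have : (L ∘ (AffineMap.lineMap θ (θ + D) : ℝ →ᵃ[ℝ] (Fin p → ℝ))) = g := by
      funext t
      simp [hg, AffineMap.lineMap_apply, Function.comp, add_comm]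
    rw [← this]
    simpa using haff
  have hslope : fderiv ℝ L θ D ≤ L θhat - L θ := by
    have := hgconv.le_slope_of_hasDerivAt (Set.mem_univ (0:ℝ)) (Set.mem_univ (1:ℝ))
      one_pos hgderiv
    have hval : slope g 0 1 = L θhat - L θ := by
      have h1 : θ + D = θhat := by funext j; simp [hD]
      simp [slope_def_field, hg, h1]
    linarith [hval ▸ this]
  -- expand the directional derivative as a sum
  have hDsum : fderiv ℝ L θ D = ∑ j, D j * fderiv ℝ L θ (Pi.single j 1) := by
    have hexp : D = ∑ j, D j • (Pi.single j 1 : Fin p → ℝ) := by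
      funext i
      rw [Finset.sum_apply]
      simp [Pi.single_apply, Finset.sum_ite_eq', mul_comm]
    calc fderiv ℝ L θ D = fderiv ℝ L θ (∑ j, D j • (Pi.single j 1 : Fin p → ℝ)) := by
          rw [← hexp]
      _ = ∑ j, D j * fderiv ℝ L θ (Pi.single j 1) := by
          rw [map_sum]; simp [smul_eq_mul]
  -- Hölder bound on the directional derivative
  have hholder : -(∑ j, |D j|) * (lam / 2) ≤ fderiv ℝ L θ D := by
    rw [hDsum, neg_mul, Finset.sum_mul, ← Finset.sum_neg_distrib]
    apply Finset.sum_le_sum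
    intro j _
    have h1 : |D j * fderiv ℝ L θ (Pi.single j 1)| ≤ |D j| * (lam / 2) := by
      rw [abs_mul]
      exact mul_le_mul_of_nonneg_left (hgrad j) (abs_nonneg _)
    exact neg_le_of_abs_le h1
  -- basic inequality
  have hbasic : lam * ∑ j, |θhat j| - lam * ∑ j, |θ j| ≤ L θ - L θhat := by
    have := hmin θ; linarith
  -- ℓ¹ decomposition
  set S := Finset.univ.filter (fun j : Fin p => (j : ℕ) < d) with hS
  set T := Finset.univ.filter (fun j : Fin p => d ≤ (j : ℕ)) with hT
  have hsplit : ∀ f : Fin p → ℝ, ∑ j, f j = ∑ j ∈ S, f j + ∑ j ∈ T, f j := by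
    intro f
    rw [hS, hT, ← Finset.sum_filter_add_sum_filter_not Finset.univ (fun j : Fin p => (j:ℕ) < d) f]
    congr 1
    apply Finset.sum_congr _ (fun _ _ => rfl)
    ext j; simp [not_lt]
  have hl1 : ∑ j ∈ T, |D j| - ∑ j ∈ S, |D j| ≤ ∑ j, |θhat j| - ∑ j, |θ j| := by
    rw [hsplit (fun j => |θhat j|), hsplit (fun j => |θ j|)]
    have hTeq : ∑ j ∈ T, |θhat j| = ∑ j ∈ T, |D j| := by
      apply Finset.sum_congr rfl
      intro j hj
      rw [hT, Finset.mem_filter] at hj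
      rw [hD]; simp [hsupp j hj.2]
    have hT0 : ∑ j ∈ T, |θ j| = 0 := by
      apply Finset.sum_eq_zero
      intro j hj
      rw [hT, Finset.mem_filter] at hj
      simp [hsupp j hj.2]
    have hSle : ∑ j ∈ S, |θ j| - ∑ j ∈ S, |D j| ≤ ∑ j ∈ S, |θhat j| := by
      rw [← Finset.sum_sub_distrib]
      apply Finset.sum_le_sum
      intro j _
      have := abs_sub_abs_le_abs_sub (θ j) (θhat j)
      have h2 : |θ j - θhat j| = |D j| := by rw [hD, abs_sub_comm]
      linarith
    linarith
  -- combine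
  have htotal : ∑ j, |D j| = ∑ j ∈ S, |D j| + ∑ j ∈ T, |D j| := hsplit _
  have hkey : lam * (∑ j ∈ T, |D j| - ∑ j ∈ S, |D j|) ≤
      (∑ j ∈ S, |D j| + ∑ j ∈ T, |D j|) * (lam / 2) := by
    have h1 : lam * (∑ j ∈ T, |D j| - ∑ j ∈ S, |D j|) ≤
        lam * (∑ j, |θhat j| - ∑ j, |θ j|) :=
      mul_le_mul_of_nonneg_left hl1 hlam.le
    have h2 : L θ - L θhat ≤ -(fderiv ℝ L θ D) := by linarith
    have h3 : -(fderiv ℝ L θ D) ≤ (∑ j, |D j|) * (lam / 2) := by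
      have := hholder; linarith
    rw [← htotal]
    nlinarith
  have hpos : (0:ℝ) < lam / 2 := by linarith
  nlinarith [hkey]
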